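/- In a graph consisting of the union of three internally disjoint paths Q₁, Q₂, Q₃ from a common vertex set X-part to a vertex z, together with a tree S connecting their three endvertices in X, where each Qᵢ contains a vertex of A, the union S ∪ Q₁ ∪ Q₂ ∪ Q₃ contains a theta graph each of whose three subdivided edges contains a vertex of A, and hence contains an even A-cycle. -/

import Mathlib

open SimpleGraph

private lemma firstHit {V : Type*} {G : SimpleGraph V} (T : Set V) :
    ∀ {a b : V} (p : G.Walk a b), b ∈ T →
    ∃ (u : V) (_ : u ∈ T) (q : G.Walk a u) (r : G.Walk u b),
      p = q.append r ∧ ∀ x ∈ q.support, x ∈ T → x = u := by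
  intro a b p
  induction p with
  | nil => intro hb; exact ⟨_, hb, Walk.nil, Walk.nil, rfl, by simp⟩
  | @cons a c b h p ih =>
    intro hb
    by_cases ha : a ∈ T
    · exact ⟨a, ha, Walk.nil, Walk.cons h p, rfl, by simp⟩
    · obtain ⟨u, hu, q, r, hqr, hq⟩ := ih hb
      refine ⟨u, hu, Walk.cons h q, r, by simp [hqr], ?_⟩
      intro x hx hxT
      rcases List.mem_cons.mp (by simpa using hx) with h1 | h1
      · exact absurd (h1 ▸ hxT) ha
      · exact hq x h1 hxT

private lemma no_end_edge {V : Type*} {G : SimpleGraph V} {u w : V} {P : G.Walk u w}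
    (hP : P.IsPath) (hlen : 2 ≤ P.length) : s(u, w) ∉ P.edges := by
  intro he
  cases P with
  | nil => simp at he
  | @cons _ v _ h P' =>
    rw [Walk.edges_cons, List.mem_cons] at he
    rcases he with he | he
    · rcases Sym2.eq_iff.mp he with ⟨-, hw⟩ | ⟨hv, -⟩
      · subst hw
        have hnil := Walk.isPath_iff_eq_nil.mp hP.of_cons
        subst hnil
        simp at hlen
      · exact h.ne hv
    · exact ((Walk.cons_isPath_iff h P').mp hP).2 (P'.fst_mem_support_of_mem_edges he)

private lemma internal_length {V : Type*} {G : SimpleGraph V} {u w : V} {P : G.Walk u w}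
    {a : V} (ha : a ∈ P.support) (hau : a ≠ u) (haw : a ≠ w) : 2 ≤ P.length := by
  cases P with
  | nil => simp at ha; exact absurd ha hau
  | cons h P' =>
    cases P' with
    | nil =>
      simp at ha
      rcases ha with rfl | rfl
      · exact absurd rfl hau
      · exact absurd rfl haw
    | cons h' P'' => simp [Walk.length_cons]

private lemma cycle_of_two_paths {V : Type*} {G : SimpleGraph V} {u w : V}
    {P Q : G.Walk u w} (hP : P.IsPath) (hQ : Q.IsPath)
    (hint : ∀ x ∈ P.support, x ∈ Q.support → x = u ∨ x = w)
    (hPl : 2 ≤ P.length) (hQl : 2 ≤ Q.length) :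
    (P.append Q.reverse).IsCycle := by
  have key : ∀ e ∈ P.edges, e ∉ Q.edges := by
    intro e heP heQ
    induction e with
    | _ a b =>
      have haP := P.fst_mem_support_of_mem_edges heP
      have hbP := P.snd_mem_support_of_mem_edges heP
      have haQ := Q.fst_mem_support_of_mem_edges heQ
      have hbQ := Q.snd_mem_support_of_mem_edges heQ
      have hab : a ≠ b := (P.adj_of_mem_edges heP).ne
      rcases hint a haP haQ with rfl | rfl <;> rcases hint b hbP hbQ with rfl | rfl
      · exact hab rfl
      · exact no_end_edge hP hPl heP
      · exact no_end_edge hP hPl (by rwa [Sym2.eq_swap] at heP)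
      · exact hab rfl
  constructor
  constructor
  constructor
  · -- edges nodup
    rw [Walk.edges_append, Walk.edges_reverse]
    refine List.Nodup.append hP.edges_nodup (by simpa using hQ.edges_nodup) ?_
    intro e he he'
    exact key e he (by simpa using he')
  · -- ne nil
    intro h
    have := congrArg Walk.length h
    simp [Walk.length_append] at this
    rw [Walk.nil_iff_length_eq, Walk.nil_iff_length_eq] at this
    omega
  · -- support tail nodup
    rw [Walk.tail_support_append]
    refine List.Nodup.append (hP.support_nodup.tail) ?_ ?_
    · exact (hQ.reverse.support_nodup).tail
    · intro x hx hx'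
      have hxP : x ∈ P.support := List.mem_of_mem_tail hx
      have hxQ : x ∈ Q.support := by
        have := List.mem_of_mem_tail hx'
        rwa [Walk.support_reverse, List.mem_reverse] at this
      rcases hint x hxP hxQ with rfl | rfl
      · have := hP.support_nodup
        rw [P.support_eq_cons] at this
        exact (List.nodup_cons.mp this).1 hx
      · have := hQ.reverse.support_nodup
        rw [Q.reverse.support_eq_cons] at this
        exact (List.nodup_cons.mp this).1 hx'

private lemma mem_map_support {V : Type*} {G : SimpleGraph V} {S : G.Subgraph} {a b : S.verts}
    {p : S.coe.Walk a b} {x : V} :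
    x ∈ (p.map S.hom).support ↔ ∃ (h : x ∈ S.verts), (⟨x, h⟩ : S.verts) ∈ p.support := by
  rw [Walk.support_map]
  constructor
  · intro hx
    rw [List.mem_map] at hx
    obtain ⟨y, hy, rfl⟩ := hx
    exact ⟨y.2, by simpa using hy⟩
  · rintro ⟨h, hy⟩
    rw [List.mem_map]
    exact ⟨⟨x, h⟩, hy, rfl⟩

private lemma map_edges_mem {V : Type*} {G : SimpleGraph V} {S : G.Subgraph} {a b : S.verts}
    {p : S.coe.Walk a b} {e : Sym2 V} (he : e ∈ (p.map S.hom).edges) : e ∈ S.edgeSet := by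
  rw [Walk.edges_map, List.mem_map] at he
  obtain ⟨e', he', rfl⟩ := he
  have h1 : e' ∈ S.coe.edgeSet := p.edges_subset_edgeSet he'
  have h2 : Sym2.map (Subtype.val) e' ∈ S.edgeSet := by
    rw [← S.image_coe_edgeSet_coe]
    exact Set.mem_image_of_mem _ h1
  convert h2 using 2
  rfl

private lemma glue_path {V : Type*} {G : SimpleGraph V} {m xi z : V} {R : G.Walk m xi}
    {Q : G.Walk xi z} (hR : R.IsPath) (hQ : Q.IsPath)
    (hint : ∀ y ∈ R.support, y ∈ Q.support → y = xi) : (R.append Q).IsPath := by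
  rw [Walk.isPath_def, Walk.support_append]
  refine List.Nodup.append hR.support_nodup hQ.support_nodup.tail ?_
  intro y hy hy'
  have : y = xi := hint y hy (List.mem_of_mem_tail hy')
  subst this
  have := hQ.support_nodup
  rw [Q.support_eq_cons] at this
  exact (List.nodup_cons.mp this).1 hy'

private lemma pair_int {V : Type*} {G : SimpleGraph V} {m xa xb z : V}
    {Ra : G.Walk m xa} {Rb : G.Walk m xb} {Qa : G.Walk xa z} {Qb : G.Walk xb z}
    (hRab : ∀ x, x ∈ Ra.support → x ∈ Rb.support → x = m)
    (hSa : ∀ x ∈ Ra.support, x ∈ Qb.support → x = xb)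
    (hSb : ∀ x ∈ Rb.support, x ∈ Qa.support → x = xa)
    (hQab : ∀ x, x ∈ Qa.support → x ∈ Qb.support → x = z) :
    ∀ x, x ∈ (Ra.append Qa).support → x ∈ (Rb.append Qb).support → x = m ∨ x = z := by
  intro x hx1 hx2
  rw [Walk.mem_support_append_iff] at hx1 hx2
  rcases hx1 with hx1 | hx1 <;> rcases hx2 with hx2 | hx2
  · exact Or.inl (hRab x hx1 hx2)
  · have : x = xb := hSa x hx1 hx2
    subst this
    exact Or.inl (hRab _ hx1 Rb.end_mem_support)
  · have : x = xa := hSb x hx2 hx1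
    subst this
    exact Or.inl (hRab _ Ra.end_mem_support hx2)
  · exact Or.inr (hQab x hx1 hx2)

private lemma even_cycle_clause {V : Type*} {G : SimpleGraph V} (A : Set V)
    (Pr : Sym2 V → Prop) {u w : V}
    {P Q : G.Walk u w} (hP : P.IsPath) (hQ : Q.IsPath)
    (hint : ∀ x ∈ P.support, x ∈ Q.support → x = u ∨ x = w)
    (hPl : 2 ≤ P.length) (hQl : 2 ≤ Q.length) (hpar : Even (P.length + Q.length))
    (hA : ∃ a ∈ A, a ∈ P.support)
    (heP : ∀ e ∈ P.edges, Pr e) (heQ : ∀ e ∈ Q.edges, Pr e) :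
    ∃ (w' : V) (c : G.Walk w' w'), c.IsCycle ∧ Even c.length ∧
      (∃ a ∈ A, a ∈ c.support) ∧ ∀ e ∈ c.edges, Pr e := by
  refine ⟨u, P.append Q.reverse, cycle_of_two_paths hP hQ hint hPl hQl, ?_, ?_, ?_⟩
  · simpa [Walk.length_append, Walk.length_reverse] using hpar
  · obtain ⟨a, haA, haP⟩ := hA
    exact ⟨a, haA, (Walk.mem_support_append_iff _ _).mpr (Or.inl haP)⟩
  · intro e he
    rw [Walk.edges_append, List.mem_append, Walk.edges_reverse, List.mem_reverse] at he
    rcases he with he | he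
    · exact heP e he
    · exact heQ e he


/-- Three paths `Q₁, Q₂, Q₃` to a common vertex `z`, pairwise meeting only in `z`, each
containing an internal vertex of `A`, together with a tree `S` (disjoint from `z` and from
the interiors of the `Qᵢ`) connecting their starting vertices, contain a theta graph all
three of whose subdivided edges meet `A`, and hence an even `A`-cycle. -/
theorem tree_plus_three_paths_theta_even_A_cycle {V : Type*} (G : SimpleGraph V)
    (A : Set V) (z x₁ x₂ x₃ : V)
    (hx12 : x₁ ≠ x₂) (hx13 : x₁ ≠ x₃) (hx23 : x₂ ≠ x₃)
    (hxz : x₁ ≠ z ∧ x₂ ≠ z ∧ x₃ ≠ z)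
    (Q₁ : G.Walk x₁ z) (Q₂ : G.Walk x₂ z) (Q₃ : G.Walk x₃ z)
    (hQ₁ : Q₁.IsPath) (hQ₂ : Q₂.IsPath) (hQ₃ : Q₃.IsPath)
    -- the paths pairwise meet exactly in z
    (h12 : ∀ w, w ∈ Q₁.support → w ∈ Q₂.support → w = z)
    (h13 : ∀ w, w ∈ Q₁.support → w ∈ Q₃.support → w = z)
    (h23 : ∀ w, w ∈ Q₂.support → w ∈ Q₃.support → w = z)
    -- S is a tree containing x₁, x₂, x₃, avoiding z and the interiors of the Qᵢ
    (S : G.Subgraph) (hS : S.coe.Connected ∧ S.coe.IsAcyclic)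
    (hxS : x₁ ∈ S.verts ∧ x₂ ∈ S.verts ∧ x₃ ∈ S.verts) (hzS : z ∉ S.verts)
    (hS1 : ∀ w ∈ S.verts, w ∈ Q₁.support → w = x₁)
    (hS2 : ∀ w ∈ S.verts, w ∈ Q₂.support → w = x₂)
    (hS3 : ∀ w ∈ S.verts, w ∈ Q₃.support → w = x₃)
    -- each Qᵢ contains an internal vertex of A outside S
    (hA1 : ∃ a ∈ A, a ∈ Q₁.support ∧ a ≠ x₁ ∧ a ≠ z ∧ a ∉ S.verts)
    (hA2 : ∃ a ∈ A, a ∈ Q₂.support ∧ a ≠ x₂ ∧ a ≠ z ∧ a ∉ S.verts)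
    (hA3 : ∃ a ∈ A, a ∈ Q₃.support ∧ a ≠ x₃ ∧ a ≠ z ∧ a ∉ S.verts) :
    (∃ (u w : V) (_ : u ≠ w) (P₁ P₂ P₃ : G.Walk u w),
      P₁.IsPath ∧ P₂.IsPath ∧ P₃.IsPath ∧
      (∀ x, x ∈ P₁.support → x ∈ P₂.support → x = u ∨ x = w) ∧
      (∀ x, x ∈ P₂.support → x ∈ P₃.support → x = u ∨ x = w) ∧
      (∀ x, x ∈ P₃.support → x ∈ P₁.support → x = u ∨ x = w) ∧
      (∃ a ∈ A, a ∈ P₁.support) ∧ (∃ a ∈ A, a ∈ P₂.support) ∧ (∃ a ∈ A, a ∈ P₃.support) ∧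
      (∀ e : Sym2 V, (e ∈ P₁.edges ∨ e ∈ P₂.edges ∨ e ∈ P₃.edges) →
        e ∈ S.edgeSet ∨ e ∈ Q₁.edges ∨ e ∈ Q₂.edges ∨ e ∈ Q₃.edges)) ∧
    (∃ (w : V) (c : G.Walk w w), c.IsCycle ∧ Even c.length ∧ (∃ a ∈ A, a ∈ c.support) ∧
      ∀ e ∈ c.edges, e ∈ S.edgeSet ∨ e ∈ Q₁.edges ∨ e ∈ Q₂.edges ∨ e ∈ Q₃.edges) := by
  classical
  obtain ⟨hconn, -⟩ := hS
  obtain ⟨hx1S, hx2S, hx3S⟩ := hxS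
  obtain ⟨hx1z, hx2z, hx3z⟩ := hxz
  obtain ⟨w12⟩ := hconn ⟨x₁, hx1S⟩ ⟨x₂, hx2S⟩
  obtain ⟨w31⟩ := hconn ⟨x₃, hx3S⟩ ⟨x₁, hx1S⟩
  set W : S.coe.Walk ⟨x₁, hx1S⟩ ⟨x₂, hx2S⟩ := w12.bypass with hWdef
  have hWp : W.IsPath := w12.bypass_isPath
  obtain ⟨m, hmT, q3, r3, hq3r3, hq3min⟩ :=
    firstHit {x : ↑S.verts | x ∈ W.support} w31.bypass W.start_mem_support
  have hmW : m ∈ W.support := hmT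
  have hq3p : q3.IsPath := Walk.IsPath.of_append_left (hq3r3 ▸ w31.bypass_isPath)
  set R1 := W.takeUntil m hmW with hR1def
  set R2 := W.dropUntil m hmW with hR2def
  have hsplit : R1.append R2 = W := W.take_spec hmW
  have hR1p : R1.IsPath := hWp.takeUntil hmW
  have hR2p : R2.IsPath := hWp.dropUntil hmW
  have hnd : (R1.append R2).support.Nodup := by rw [hsplit]; exact hWp.support_nodup
  have d12 : ∀ y, y ∈ R1.support → y ∈ R2.support → y = m := by
    intro y hy1 hy2
    rw [Walk.support_append] at hnd
    rw [R2.support_eq_cons] at hy2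
    rcases List.mem_cons.mp hy2 with rfl | hy2'
    · rfl
    · exact absurd hy2' (fun h => (List.nodup_append'.mp hnd).2.2 hy1 h)
  have d13 : ∀ y, y ∈ R1.support → y ∈ q3.support → y = m := fun y hy1 hy3 =>
    hq3min y hy3 (W.support_takeUntil_subset hmW hy1)
  have d23 : ∀ y, y ∈ R2.support → y ∈ q3.support → y = m := fun y hy2 hy3 =>
    hq3min y hy3 (W.support_dropUntil_subset hmW hy2)
  set Ra1 : G.Walk (↑m) x₁ := (R1.map S.hom).reverse with hRa1def
  set Ra2 : G.Walk (↑m) x₂ := R2.map S.hom with hRa2def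
  set Ra3 : G.Walk (↑m) x₃ := (q3.map S.hom).reverse with hRa3def
  have hRa1p : Ra1.IsPath := (Walk.map_isPath_of_injective Subgraph.hom_injective hR1p).reverse
  have hRa2p : Ra2.IsPath := Walk.map_isPath_of_injective Subgraph.hom_injective hR2p
  have hRa3p : Ra3.IsPath := (Walk.map_isPath_of_injective Subgraph.hom_injective hq3p).reverse
  have m1 : ∀ x : V, x ∈ Ra1.support ↔ ∃ h : x ∈ S.verts, (⟨x, h⟩ : ↑S.verts) ∈ R1.support := by
    intro x
    exact (Iff.of_eq (congrArg (fun l => x ∈ l) (Walk.support_reverse (R1.map S.hom)))).trans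
      (List.mem_reverse.trans mem_map_support)
  have m2 : ∀ x : V, x ∈ Ra2.support ↔ ∃ h : x ∈ S.verts, (⟨x, h⟩ : ↑S.verts) ∈ R2.support := by
    intro x
    rw [hRa2def]
    exact mem_map_support
  have m3 : ∀ x : V, x ∈ Ra3.support ↔ ∃ h : x ∈ S.verts, (⟨x, h⟩ : ↑S.verts) ∈ q3.support := by
    intro x
    exact (Iff.of_eq (congrArg (fun l => x ∈ l) (Walk.support_reverse (q3.map S.hom)))).trans
      (List.mem_reverse.trans mem_map_support)
  have v1 : ∀ x ∈ Ra1.support, x ∈ S.verts := fun x hx => ((m1 x).mp hx).choose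
  have v2 : ∀ x ∈ Ra2.support, x ∈ S.verts := fun x hx => ((m2 x).mp hx).choose
  have v3 : ∀ x ∈ Ra3.support, x ∈ S.verts := fun x hx => ((m3 x).mp hx).choose
  have g12 : ∀ x, x ∈ Ra1.support → x ∈ Ra2.support → x = ↑m := by
    intro x h1 h2
    obtain ⟨hv, hy1⟩ := (m1 x).mp h1
    obtain ⟨hv', hy2⟩ := (m2 x).mp h2
    exact congrArg Subtype.val (d12 ⟨x, hv⟩ hy1 hy2)
  have g23 : ∀ x, x ∈ Ra2.support → x ∈ Ra3.support → x = ↑m := by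
    intro x h1 h2
    obtain ⟨hv, hy1⟩ := (m2 x).mp h1
    obtain ⟨hv', hy2⟩ := (m3 x).mp h2
    exact congrArg Subtype.val (d23 ⟨x, hv⟩ hy1 hy2)
  have g31 : ∀ x, x ∈ Ra3.support → x ∈ Ra1.support → x = ↑m := by
    intro x h1 h2
    obtain ⟨hv, hy1⟩ := (m3 x).mp h1
    obtain ⟨hv', hy2⟩ := (m1 x).mp h2
    exact congrArg Subtype.val (d13 ⟨x, hv⟩ hy2 hy1)
  set P₁ : G.Walk (↑m) z := Ra1.append Q₁ with hP₁def
  set P₂ : G.Walk (↑m) z := Ra2.append Q₂ with hP₂def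
  set P₃ : G.Walk (↑m) z := Ra3.append Q₃ with hP₃def
  have hP₁p : P₁.IsPath := glue_path hRa1p hQ₁ (fun y hy hq => hS1 y (v1 y hy) hq)
  have hP₂p : P₂.IsPath := glue_path hRa2p hQ₂ (fun y hy hq => hS2 y (v2 y hy) hq)
  have hP₃p : P₃.IsPath := glue_path hRa3p hQ₃ (fun y hy hq => hS3 y (v3 y hy) hq)
  have hmz : (↑m : V) ≠ z := fun h => hzS (h ▸ m.2)
  have int12 : ∀ x, x ∈ P₁.support → x ∈ P₂.support → x = ↑m ∨ x = z :=
    pair_int g12 (fun x hx hq => hS2 x (v1 x hx) hq) (fun x hx hq => hS1 x (v2 x hx) hq) h12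
  have int23 : ∀ x, x ∈ P₂.support → x ∈ P₃.support → x = ↑m ∨ x = z :=
    pair_int g23 (fun x hx hq => hS3 x (v2 x hx) hq) (fun x hx hq => hS2 x (v3 x hx) hq) h23
  have int31 : ∀ x, x ∈ P₃.support → x ∈ P₁.support → x = ↑m ∨ x = z :=
    pair_int g31 (fun x hx hq => hS1 x (v3 x hx) hq) (fun x hx hq => hS3 x (v1 x hx) hq)
      (fun w h3 h1 => h13 w h1 h3)
  obtain ⟨a₁, ha₁A, ha₁Q, ha₁x, ha₁z, ha₁S⟩ := hA1
  obtain ⟨a₂, ha₂A, ha₂Q, ha₂x, ha₂z, ha₂S⟩ := hA2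
  obtain ⟨a₃, ha₃A, ha₃Q, ha₃x, ha₃z, ha₃S⟩ := hA3
  have ha₁P : a₁ ∈ P₁.support := (Walk.mem_support_append_iff _ _).mpr (Or.inr ha₁Q)
  have ha₂P : a₂ ∈ P₂.support := (Walk.mem_support_append_iff _ _).mpr (Or.inr ha₂Q)
  have ha₃P : a₃ ∈ P₃.support := (Walk.mem_support_append_iff _ _).mpr (Or.inr ha₃Q)
  have hl₁ : 2 ≤ P₁.length := internal_length ha₁P (fun h => ha₁S (by rw [h]; exact m.2)) ha₁z
  have hl₂ : 2 ≤ P₂.length := internal_length ha₂P (fun h => ha₂S (by rw [h]; exact m.2)) ha₂z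
  have hl₃ : 2 ≤ P₃.length := internal_length ha₃P (fun h => ha₃S (by rw [h]; exact m.2)) ha₃z
  have e1 : ∀ e ∈ P₁.edges, e ∈ S.edgeSet ∨ e ∈ Q₁.edges ∨ e ∈ Q₂.edges ∨ e ∈ Q₃.edges := by
    intro e he
    rw [hP₁def, Walk.edges_append, List.mem_append, hRa1def] at he
    replace he := he.imp_left (fun h =>
      List.mem_reverse.mp ((congrArg (e ∈ ·) (Walk.edges_reverse (R1.map S.hom))).mp h))
    rcases he with he | he
    · exact Or.inl (map_edges_mem he)
    · exact Or.inr (Or.inl he)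
  have e2 : ∀ e ∈ P₂.edges, e ∈ S.edgeSet ∨ e ∈ Q₁.edges ∨ e ∈ Q₂.edges ∨ e ∈ Q₃.edges := by
    intro e he
    rw [hP₂def, Walk.edges_append, List.mem_append, hRa2def] at he
    rcases he with he | he
    · exact Or.inl (map_edges_mem he)
    · exact Or.inr (Or.inr (Or.inl he))
  have e3 : ∀ e ∈ P₃.edges, e ∈ S.edgeSet ∨ e ∈ Q₁.edges ∨ e ∈ Q₂.edges ∨ e ∈ Q₃.edges := by
    intro e he
    rw [hP₃def, Walk.edges_append, List.mem_append, hRa3def] at he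
    replace he := he.imp_left (fun h =>
      List.mem_reverse.mp ((congrArg (e ∈ ·) (Walk.edges_reverse (q3.map S.hom))).mp h))
    rcases he with he | he
    · exact Or.inl (map_edges_mem he)
    · exact Or.inr (Or.inr (Or.inr he))
  constructor
  · refine ⟨↑m, z, hmz, P₁, P₂, P₃, hP₁p, hP₂p, hP₃p, int12, int23, int31,
      ⟨a₁, ha₁A, ha₁P⟩, ⟨a₂, ha₂A, ha₂P⟩, ⟨a₃, ha₃A, ha₃P⟩, ?_⟩
    intro e he
    rcases he with he | he | he
    · exact e1 e he
    · exact e2 e he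
    · exact e3 e he
  · have hpar : Even (P₁.length + P₂.length) ∨ Even (P₂.length + P₃.length) ∨
        Even (P₃.length + P₁.length) := by
      simp only [Nat.even_iff]
      omega
    rcases hpar with hp | hp | hp
    · exact even_cycle_clause A _ hP₁p hP₂p int12 hl₁ hl₂ hp ⟨a₁, ha₁A, ha₁P⟩ e1 e2
    · exact even_cycle_clause A _ hP₂p hP₃p int23 hl₂ hl₃ hp ⟨a₂, ha₂A, ha₂P⟩ e2 e3
    · exact even_cycle_clause A _ hP₃p hP₁p int31 hl₃ hl₁ hp ⟨a₃, ha₃A, ha₃P⟩ e3 e1
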